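/- The operators σ_i on k[x₁,…,x_r] defined by σ_i(f) = s_i(f) + ∂_i(f), where s_i swaps x_i and x_{i+1} and ∂_i is the Demazure operator, satisfy the Coxeter relations of the symmetric group: σ_i² = id, σ_i σ_{i+1} σ_i = σ_{i+1} σ_i σ_{i+1}, and σ_i σ_j = σ_j σ_i for |i-j| > 1. Hence they define an action (the deformed or 'diamond' action) of S_r on k[x₁,…,x_r]. -/

import Mathlib

open MvPolynomial

section Aux
variable {k : Type*} [CommRing k] {n : ℕ}

lemma cancelXsubX {a b : Fin n} (hab : a ≠ b)
    {p q : MvPolynomial (Fin n) k} (h : (X a - X b) * p = (X a - X b) * q) : p = q := by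
  classical
  set φ : MvPolynomial (Fin n) k →ₐ[k] MvPolynomial (Fin n) k :=
    aeval (fun c => if c = a then X a + X b else X c) with hφ
  set ψ : MvPolynomial (Fin n) k →ₐ[k] MvPolynomial (Fin n) k :=
    aeval (fun c => if c = a then X a - X b else X c) with hψ
  have hinj : Function.Injective φ := by
    have hcomp : ∀ p, ψ (φ p) = p := by
      intro p
      have : (ψ.comp φ) = AlgHom.id k (MvPolynomial (Fin n) k) := by
        apply MvPolynomial.algHom_ext
        intro i
        by_cases hi : i = a <;>
          simp [hφ, hψ, hi, if_neg (Ne.symm hab), sub_add_cancel]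
      calc ψ (φ p) = (ψ.comp φ) p := rfl
        _ = p := by rw [this]; rfl
    intro x y hxy
    have := congrArg ψ hxy
    rwa [hcomp, hcomp] at this
  apply hinj
  have h2 := congrArg φ h
  simp only [map_mul, map_sub] at h2
  have hXa : φ (X a) - φ (X b) = X a := by
    simp [hφ, if_neg (Ne.symm hab)]
  rw [hXa] at h2
  exact (MvPolynomial.isRegular_X).left h2

lemma rename_swap_swap (a b : Fin n) (p : MvPolynomial (Fin n) k) :
    rename (Equiv.swap a b) (rename (Equiv.swap a b) p) = p := by
  rw [rename_rename]
  have : (⇑(Equiv.swap a b)) ∘ ⇑(Equiv.swap a b) = id := by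
    ext x; simp
  rw [this, rename_id, AlgHom.id_apply]

lemma swap_image {a b : Fin n} (hab : a ≠ b) {f g : MvPolynomial (Fin n) k}
    (h : (X a - X b) * (g - rename (Equiv.swap a b) f) = f - rename (Equiv.swap a b) f) :
    rename (Equiv.swap a b) g = g + f - rename (Equiv.swap a b) f := by
  have h2 := congrArg (fun p => rename (Equiv.swap a b) p) h
  simp only [map_mul, map_sub, rename_X, Equiv.swap_apply_left, Equiv.swap_apply_right,
    rename_swap_swap] at h2
  apply cancelXsubX hab
  linear_combination -h2 - h

lemma rename_swap_comm {a b c d : Fin n} (hac : a ≠ c) (had : a ≠ d) (hbc : b ≠ c)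
    (hbd : b ≠ d) (p : MvPolynomial (Fin n) k) :
    rename (Equiv.swap a b) (rename (Equiv.swap c d) p) =
      rename (Equiv.swap c d) (rename (Equiv.swap a b) p) := by
  rw [rename_rename, rename_rename]
  have hfun : (⇑(Equiv.swap a b)) ∘ ⇑(Equiv.swap c d) =
      (⇑(Equiv.swap c d)) ∘ ⇑(Equiv.swap a b) := by
    funext x
    simp only [Function.comp_apply]
    rcases eq_or_ne x a with rfl | hxa
    · rw [Equiv.swap_apply_of_ne_of_ne hac had, Equiv.swap_apply_left,
        Equiv.swap_apply_of_ne_of_ne hbc hbd]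
    rcases eq_or_ne x b with rfl | hxb
    · rw [Equiv.swap_apply_of_ne_of_ne hbc hbd, Equiv.swap_apply_right,
        Equiv.swap_apply_of_ne_of_ne hac had]
    rw [Equiv.swap_apply_of_ne_of_ne hxa hxb]
    rcases eq_or_ne x c with rfl | hxc
    · rw [Equiv.swap_apply_left, Equiv.swap_apply_of_ne_of_ne (Ne.symm had) (Ne.symm hbd)]
    rcases eq_or_ne x d with rfl | hxd
    · rw [Equiv.swap_apply_right, Equiv.swap_apply_of_ne_of_ne (Ne.symm hac) (Ne.symm hbc)]
    rw [Equiv.swap_apply_of_ne_of_ne hxc hxd, Equiv.swap_apply_of_ne_of_ne hxa hxb]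
  rw [hfun]

lemma braid_aux {a b c : Fin n} (hab : a ≠ b) (hbc : b ≠ c) (hac : a ≠ c)
    {f g1 g2 g3 h1 h2 h3 : MvPolynomial (Fin n) k}
    (hG1 : (X a - X b) * (g1 - rename (Equiv.swap a b) f) = f - rename (Equiv.swap a b) f)
    (hG2 : (X b - X c) * (g2 - rename (Equiv.swap b c) g1) = g1 - rename (Equiv.swap b c) g1)
    (hG3 : (X a - X b) * (g3 - rename (Equiv.swap a b) g2) = g2 - rename (Equiv.swap a b) g2)
    (hH1 : (X b - X c) * (h1 - rename (Equiv.swap b c) f) = f - rename (Equiv.swap b c) f)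
    (hH2 : (X a - X b) * (h2 - rename (Equiv.swap a b) h1) = h1 - rename (Equiv.swap a b) h1)
    (hH3 : (X b - X c) * (h3 - rename (Equiv.swap b c) h2) = h2 - rename (Equiv.swap b c) h2) :
    g3 = h3 := by
  have s2a : Equiv.swap b c a = a := Equiv.swap_apply_of_ne_of_ne hab hac
  have s1c : Equiv.swap a b c = c := Equiv.swap_apply_of_ne_of_ne (Ne.symm hac) (Ne.symm hbc)
  -- braid identity for the rename maps
  have hbraidf : ∀ p : MvPolynomial (Fin n) k,
      rename (Equiv.swap b c) (rename (Equiv.swap a b) (rename (Equiv.swap b c) p)) =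
        rename (Equiv.swap a b) (rename (Equiv.swap b c) (rename (Equiv.swap a b) p)) := by
    intro p
    rw [rename_rename, rename_rename, rename_rename, rename_rename]
    have hfun : ((⇑(Equiv.swap b c)) ∘ ⇑(Equiv.swap a b)) ∘ ⇑(Equiv.swap b c) =
        ((⇑(Equiv.swap a b)) ∘ ⇑(Equiv.swap b c)) ∘ ⇑(Equiv.swap a b) := by
      funext x
      simp only [Function.comp_apply]
      rcases eq_or_ne x a with rfl | hxa
      · simp only [s2a, s1c, Equiv.swap_apply_left, Equiv.swap_apply_right]
      rcases eq_or_ne x b with rfl | hxb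
      · simp only [s2a, s1c, Equiv.swap_apply_left, Equiv.swap_apply_right]
      rcases eq_or_ne x c with rfl | hxc
      · simp only [s2a, s1c, Equiv.swap_apply_left, Equiv.swap_apply_right]
      simp only [Equiv.swap_apply_of_ne_of_ne hxa hxb, Equiv.swap_apply_of_ne_of_ne hxb hxc]
    rw [hfun]
  -- E2 : apply swap b c to hG1
  have E2 : (X a - X c) * (rename (Equiv.swap b c) g1
        - rename (Equiv.swap b c) (rename (Equiv.swap a b) f)) =
      rename (Equiv.swap b c) f - rename (Equiv.swap b c) (rename (Equiv.swap a b) f) := by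
    have t := congrArg (fun p => rename (Equiv.swap b c) p) hG1
    simpa only [map_mul, map_sub, rename_X, s2a, Equiv.swap_apply_left] using t
  -- E3 : apply swap a b to E2
  have E3 : (X b - X c) * (rename (Equiv.swap a b) (rename (Equiv.swap b c) g1)
        - rename (Equiv.swap a b) (rename (Equiv.swap b c) (rename (Equiv.swap a b) f))) =
      rename (Equiv.swap a b) (rename (Equiv.swap b c) f)
        - rename (Equiv.swap a b) (rename (Equiv.swap b c) (rename (Equiv.swap a b) f)) := by
    have t := congrArg (fun p => rename (Equiv.swap a b) p) E2
    simpa only [map_mul, map_sub, rename_X, s1c, Equiv.swap_apply_left] using t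
  have I1 : rename (Equiv.swap a b) g1 = g1 + f - rename (Equiv.swap a b) f :=
    swap_image hab hG1
  -- E6 : apply swap a b to hG2
  have E6 : (X a - X c) * (rename (Equiv.swap a b) g2
        - rename (Equiv.swap a b) (rename (Equiv.swap b c) g1)) =
      rename (Equiv.swap a b) g1 - rename (Equiv.swap a b) (rename (Equiv.swap b c) g1) := by
    have t := congrArg (fun p => rename (Equiv.swap a b) p) hG2
    simpa only [map_mul, map_sub, rename_X, s1c, Equiv.swap_apply_right] using t
  -- mirror side
  have F2 : (X a - X c) * (rename (Equiv.swap a b) h1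
        - rename (Equiv.swap a b) (rename (Equiv.swap b c) f)) =
      rename (Equiv.swap a b) f - rename (Equiv.swap a b) (rename (Equiv.swap b c) f) := by
    have t := congrArg (fun p => rename (Equiv.swap a b) p) hH1
    simpa only [map_mul, map_sub, rename_X, s1c, Equiv.swap_apply_left,
      Equiv.swap_apply_right] using t
  have F3 : (X a - X b) * (rename (Equiv.swap b c) (rename (Equiv.swap a b) h1)
        - rename (Equiv.swap a b) (rename (Equiv.swap b c) (rename (Equiv.swap a b) f))) =
      rename (Equiv.swap b c) (rename (Equiv.swap a b) f)
        - rename (Equiv.swap a b) (rename (Equiv.swap b c) (rename (Equiv.swap a b) f)) := by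
    have t := congrArg (fun p => rename (Equiv.swap b c) p) F2
    simpa only [map_mul, map_sub, rename_X, s2a, Equiv.swap_apply_right, hbraidf f] using t
  have I2 : rename (Equiv.swap b c) h1 = h1 + f - rename (Equiv.swap b c) f :=
    swap_image hbc hH1
  have F6 : (X a - X c) * (rename (Equiv.swap b c) h2
        - rename (Equiv.swap b c) (rename (Equiv.swap a b) h1)) =
      rename (Equiv.swap b c) h1 - rename (Equiv.swap b c) (rename (Equiv.swap a b) h1) := by
    have t := congrArg (fun p => rename (Equiv.swap b c) p) hH2
    simpa only [map_mul, map_sub, rename_X, s2a, Equiv.swap_apply_left] using t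
  -- explicit multiplied formulas
  have c5 : (X a - X b) * ((X b - X c) * ((X a - X c) * g2)) =
      (X a - X c) * (f - rename (Equiv.swap a b) f + (X a - X b) * rename (Equiv.swap a b) f)
        + ((X a - X b) * (X b - X c) - (X a - X b)) *
          (rename (Equiv.swap b c) f - rename (Equiv.swap b c) (rename (Equiv.swap a b) f)
            + (X a - X c) * rename (Equiv.swap b c) (rename (Equiv.swap a b) f)) := by
    linear_combination (X a - X b) * (X a - X c) * hG2 + (X a - X c) * hG1
      + ((X a - X b) * (X b - X c) - (X a - X b)) * E2
  have c6 : (X a - X b) * ((X b - X c) * ((X a - X c) * rename (Equiv.swap a b) g2)) =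
      (X b - X c) * (f - rename (Equiv.swap a b) f + (X a - X b) * rename (Equiv.swap a b) f)
        + (X a - X b) * (X b - X c) * (f - rename (Equiv.swap a b) f)
        + ((X a - X b) * (X a - X c) - (X a - X b)) *
          (rename (Equiv.swap a b) (rename (Equiv.swap b c) f)
            - rename (Equiv.swap a b) (rename (Equiv.swap b c) (rename (Equiv.swap a b) f))
            + (X b - X c) *
              rename (Equiv.swap a b) (rename (Equiv.swap b c) (rename (Equiv.swap a b) f))) := by
    linear_combination (X a - X b) * (X b - X c) * E6 + (X a - X b) * (X b - X c) * I1
      + (X b - X c) * hG1 + ((X a - X b) * (X a - X c) - (X a - X b)) * E3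
  have cg : (X a - X b) * ((X a - X b) * ((X b - X c) * ((X a - X c) * g3))) =
      ((X a - X c) * (f - rename (Equiv.swap a b) f + (X a - X b) * rename (Equiv.swap a b) f)
        + ((X a - X b) * (X b - X c) - (X a - X b)) *
          (rename (Equiv.swap b c) f - rename (Equiv.swap b c) (rename (Equiv.swap a b) f)
            + (X a - X c) * rename (Equiv.swap b c) (rename (Equiv.swap a b) f)))
      + ((X a - X b) - 1) *
        ((X b - X c) * (f - rename (Equiv.swap a b) f + (X a - X b) * rename (Equiv.swap a b) f)
          + (X a - X b) * (X b - X c) * (f - rename (Equiv.swap a b) f)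
          + ((X a - X b) * (X a - X c) - (X a - X b)) *
            (rename (Equiv.swap a b) (rename (Equiv.swap b c) f)
              - rename (Equiv.swap a b) (rename (Equiv.swap b c) (rename (Equiv.swap a b) f))
              + (X b - X c) *
                rename (Equiv.swap a b) (rename (Equiv.swap b c) (rename (Equiv.swap a b) f)))) := by
    linear_combination (X a - X b) * (X b - X c) * (X a - X c) * hG3 + c5
      + ((X a - X b) - 1) * c6
  have d5 : (X a - X b) * ((X b - X c) * ((X a - X c) * h2)) =
      (X a - X c) * (f - rename (Equiv.swap b c) f + (X b - X c) * rename (Equiv.swap b c) f)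
        + ((X a - X b) * (X b - X c) - (X b - X c)) *
          (rename (Equiv.swap a b) f - rename (Equiv.swap a b) (rename (Equiv.swap b c) f)
            + (X a - X c) * rename (Equiv.swap a b) (rename (Equiv.swap b c) f)) := by
    linear_combination (X b - X c) * (X a - X c) * hH2 + (X a - X c) * hH1
      + ((X a - X b) * (X b - X c) - (X b - X c)) * F2
  have d6 : (X a - X b) * ((X b - X c) * ((X a - X c) * rename (Equiv.swap b c) h2)) =
      (X a - X b) * (f - rename (Equiv.swap b c) f + (X b - X c) * rename (Equiv.swap b c) f)
        + (X a - X b) * (X b - X c) * (f - rename (Equiv.swap b c) f)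
        + ((X b - X c) * (X a - X c) - (X b - X c)) *
          (rename (Equiv.swap b c) (rename (Equiv.swap a b) f)
            - rename (Equiv.swap a b) (rename (Equiv.swap b c) (rename (Equiv.swap a b) f))
            + (X a - X b) *
              rename (Equiv.swap a b) (rename (Equiv.swap b c) (rename (Equiv.swap a b) f))) := by
    linear_combination (X a - X b) * (X b - X c) * F6 + (X a - X b) * (X b - X c) * I2
      + (X a - X b) * hH1 + ((X b - X c) * (X a - X c) - (X b - X c)) * F3
  have dh : (X b - X c) * ((X b - X c) * ((X a - X b) * ((X a - X c) * h3))) =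
      ((X a - X c) * (f - rename (Equiv.swap b c) f + (X b - X c) * rename (Equiv.swap b c) f)
        + ((X a - X b) * (X b - X c) - (X b - X c)) *
          (rename (Equiv.swap a b) f - rename (Equiv.swap a b) (rename (Equiv.swap b c) f)
            + (X a - X c) * rename (Equiv.swap a b) (rename (Equiv.swap b c) f)))
      + ((X b - X c) - 1) *
        ((X a - X b) * (f - rename (Equiv.swap b c) f + (X b - X c) * rename (Equiv.swap b c) f)
          + (X a - X b) * (X b - X c) * (f - rename (Equiv.swap b c) f)
          + ((X b - X c) * (X a - X c) - (X b - X c)) *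
            (rename (Equiv.swap b c) (rename (Equiv.swap a b) f)
              - rename (Equiv.swap a b) (rename (Equiv.swap b c) (rename (Equiv.swap a b) f))
              + (X a - X b) *
                rename (Equiv.swap a b) (rename (Equiv.swap b c) (rename (Equiv.swap a b) f)))) := by
    linear_combination (X a - X b) * (X b - X c) * (X a - X c) * hH3 + d5
      + ((X b - X c) - 1) * d6
  have final : (X a - X b) * ((X a - X b) * ((X b - X c) * ((X b - X c) * ((X a - X c) * g3)))) =
      (X a - X b) * ((X a - X b) * ((X b - X c) * ((X b - X c) * ((X a - X c) * h3)))) := by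
    linear_combination (X b - X c) * cg - (X a - X b) * dh
  exact cancelXsubX hac (cancelXsubX hbc (cancelXsubX hbc
    (cancelXsubX hab (cancelXsubX hab final))))

end Aux

/-- The operators `σᵢ(f) = sᵢ(f) + ∂ᵢ(f)` on `k[x₁,…,x_r]` — characterized below by
`(xᵢ - x_{i+1})·(σᵢ f - sᵢ f) = f - sᵢ f`, where `sᵢ` swaps `xᵢ` and `x_{i+1}` — satisfy
the Coxeter relations of the symmetric group: `σᵢ² = id`, the braid relation
`σᵢ σ_{i+1} σᵢ = σ_{i+1} σᵢ σ_{i+1}`, and `σᵢ σⱼ = σⱼ σᵢ` for `|i - j| > 1`. -/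
theorem deformed_action_coxeter_relations {k : Type*} [CommRing k] (r : ℕ)
    (σ : ℕ → MvPolynomial (Fin r) k → MvPolynomial (Fin r) k)
    (hσ : ∀ (i : ℕ) (hi : i + 1 < r) (f : MvPolynomial (Fin r) k),
      (X (⟨i, Nat.lt_of_succ_lt hi⟩ : Fin r) - X (⟨i + 1, hi⟩ : Fin r)) *
          (σ i f -
            rename (Equiv.swap (⟨i, Nat.lt_of_succ_lt hi⟩ : Fin r) (⟨i + 1, hi⟩ : Fin r)) f) =
        f - rename (Equiv.swap (⟨i, Nat.lt_of_succ_lt hi⟩ : Fin r) (⟨i + 1, hi⟩ : Fin r)) f) :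
    (∀ (i : ℕ), i + 1 < r → ∀ f, σ i (σ i f) = f) ∧
    (∀ (i : ℕ), i + 2 < r → ∀ f, σ i (σ (i + 1) (σ i f)) = σ (i + 1) (σ i (σ (i + 1) f))) ∧
    (∀ (i j : ℕ), i + 1 < r → j + 1 < r → i + 1 < j → ∀ f, σ i (σ j f) = σ j (σ i f)) := by
  refine ⟨?_, ?_, ?_⟩
  · -- involution
    intro i hi f
    set a : Fin r := ⟨i, Nat.lt_of_succ_lt hi⟩ with ha
    set b : Fin r := ⟨i + 1, hi⟩ with hb
    have hab : a ≠ b := by simp only [ha, hb, ne_eq, Fin.mk.injEq]; omega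
    have E1 := hσ i hi f
    have E2 := hσ i hi (σ i f)
    have I1 := swap_image hab E1
    apply cancelXsubX hab
    linear_combination E2 + ((X a - X b) - 1) * I1 + E1
  · -- braid relation
    intro i hi2 f
    have hi : i + 1 < r := by omega
    have hab : (⟨i, Nat.lt_of_succ_lt hi⟩ : Fin r) ≠ ⟨i + 1, hi⟩ := by
      simp only [ne_eq, Fin.mk.injEq]; omega
    have hbc : (⟨i + 1, hi⟩ : Fin r) ≠ ⟨i + 2, hi2⟩ := by
      simp only [ne_eq, Fin.mk.injEq]; omega
    have hac : (⟨i, Nat.lt_of_succ_lt hi⟩ : Fin r) ≠ ⟨i + 2, hi2⟩ := by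
      simp only [ne_eq, Fin.mk.injEq]; omega
    exact braid_aux hab hbc hac (hσ i hi f) (hσ (i + 1) hi2 (σ i f))
      (hσ i hi (σ (i + 1) (σ i f))) (hσ (i + 1) hi2 f) (hσ i hi (σ (i + 1) f))
      (hσ (i + 1) hi2 (σ i (σ (i + 1) f)))
  · -- commuting relation
    intro i j hi hj hij f
    set a : Fin r := ⟨i, Nat.lt_of_succ_lt hi⟩ with ha
    set b : Fin r := ⟨i + 1, hi⟩ with hb
    set c : Fin r := ⟨j, Nat.lt_of_succ_lt hj⟩ with hc
    set d : Fin r := ⟨j + 1, hj⟩ with hd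
    have hab : a ≠ b := by simp only [ha, hb, ne_eq, Fin.mk.injEq]; omega
    have hcd : c ≠ d := by simp only [hc, hd, ne_eq, Fin.mk.injEq]; omega
    have hac : a ≠ c := by simp only [ha, hc, ne_eq, Fin.mk.injEq]; omega
    have had : a ≠ d := by simp only [ha, hd, ne_eq, Fin.mk.injEq]; omega
    have hbc : b ≠ c := by simp only [hb, hc, ne_eq, Fin.mk.injEq]; omega
    have hbd : b ≠ d := by simp only [hb, hd, ne_eq, Fin.mk.injEq]; omega
    have A := hσ i hi f
    have B := hσ j hj f
    have C := hσ i hi (σ j f)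
    have E := hσ j hj (σ i f)
    -- A' : apply swap c d to A
    have A' : (X a - X b) * (rename (Equiv.swap c d) (σ i f)
          - rename (Equiv.swap c d) (rename (Equiv.swap a b) f)) =
        rename (Equiv.swap c d) f - rename (Equiv.swap c d) (rename (Equiv.swap a b) f) := by
      have t := congrArg (fun p => rename (Equiv.swap c d) p) A
      simpa only [map_mul, map_sub, rename_X, ← ha, ← hb, ← hc, ← hd,
        Equiv.swap_apply_of_ne_of_ne hac had, Equiv.swap_apply_of_ne_of_ne hbc hbd] using t
    -- B' : apply swap a b to B
    have B' : (X c - X d) * (rename (Equiv.swap a b) (σ j f)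
          - rename (Equiv.swap a b) (rename (Equiv.swap c d) f)) =
        rename (Equiv.swap a b) f - rename (Equiv.swap a b) (rename (Equiv.swap c d) f) := by
      have t := congrArg (fun p => rename (Equiv.swap a b) p) B
      simpa only [map_mul, map_sub, rename_X, ← ha, ← hb, ← hc, ← hd,
        Equiv.swap_apply_of_ne_of_ne (Ne.symm hac) (Ne.symm hbc),
        Equiv.swap_apply_of_ne_of_ne (Ne.symm had) (Ne.symm hbd)] using t
    have hcomm := rename_swap_comm hac had hbc hbd (k := k) f
    have key : (X c - X d) * (σ i (σ j f) - rename (Equiv.swap c d) (σ i f)) =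
        σ i f - rename (Equiv.swap c d) (σ i f) := by
      apply cancelXsubX hab
      linear_combination (X c - X d) * C + B + ((X a - X b) - 1) * B' - A
        + (1 - (X c - X d)) * A' + (1 - (X a - X b)) * (1 - (X c - X d)) * hcomm
    apply cancelXsubX hcd
    linear_combination key - E
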